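/- For every valid Fibonacci representation x (a binary word containing no factor 11), one has −β² < [x0] − α[x] < −β, where α = (1+√5)/2 and β = (1−√5)/2. -/

import Mathlib

/-- The Fibonacci (Zeckendorf) value of a binary word written msd-first:
`[x₁⋯x_ℓ] = Σ_j x_j · F_{ℓ−j+2}`. -/
def fibVal : List Bool → ℕ
  | [] => 0
  | a :: rest => (if a then Nat.fib (rest.length + 2) else 0) + fibVal rest

/-- A binary word is a valid Fibonacci representation if it has no factor `11`. -/
def ValidFib (w : List Bool) : Prop :=
  w.Chain' (fun a b => a = false ∨ b = false)

noncomputable def fbF (x : List Bool) : ℝ :=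
  (fibVal (x ++ [false]) : ℝ) - Real.goldenRatio * fibVal x

noncomputable def bb : ℝ := -Real.goldenConj

lemma bb_pos : 0 < bb := by
  have := Real.goldenConj_neg; unfold bb; linarith

lemma bb_lt_one : bb < 1 := by
  have := Real.neg_one_lt_goldenConj; unfold bb; linarith

lemma bb_sq : bb ^ 2 = 1 - bb := by
  have h := Real.goldenConj_sq; unfold bb; nlinarith

lemma fbF_cons (a : Bool) (rest : List Bool) :
    fbF (a :: rest) = (if a then Real.goldenConj ^ (rest.length + 2) else 0) + fbF rest := by
  have h1 : fibVal ((a :: rest) ++ [false]) =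
      (if a then Nat.fib ((rest ++ [false]).length + 2) else 0) + fibVal (rest ++ [false]) := rfl
  have h2 : (rest ++ [false]).length = rest.length + 1 := by simp
  have h3 : fibVal (a :: rest) = (if a then Nat.fib (rest.length + 2) else 0) + fibVal rest := rfl
  have hb := Real.fib_succ_sub_goldenRatio_mul_fib (rest.length + 2)
  unfold fbF
  rw [h1, h3, h2]
  cases a
  · simp
  · simp only [if_pos rfl]
    push_cast
    nlinarith [hb]

lemma fbF_nil : fbF [] = 0 := by
  have h0 : fibVal ([] ++ [false]) = 0 := rfl
  have h1 : fibVal [] = 0 := rfl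
  unfold fbF
  rw [h0, h1]
  norm_num

lemma abs_goldConj_pow (m : ℕ) : -bb ^ m ≤ Real.goldenConj ^ m ∧ Real.goldenConj ^ m ≤ bb ^ m := by
  have h : |Real.goldenConj ^ m| = bb ^ m := by
    rw [abs_pow, abs_of_neg Real.goldenConj_neg]; rfl
  constructor
  · have := neg_abs_le (Real.goldenConj ^ m); rw [h] at this; linarith
  · have := le_abs_self (Real.goldenConj ^ m); rw [h] at this; linarith

lemma key : ∀ n (x : List Bool), x.length ≤ n → ValidFib x →
    -bb ^ 2 + bb ^ (x.length + 2) ≤ fbF x ∧ fbF x ≤ bb - bb ^ (x.length + 2) := by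
  intro n
  induction n with
  | zero =>
    intro x hlen _
    have hx : x = [] := List.length_eq_zero_iff.mp (Nat.le_zero.mp hlen)
    subst hx
    rw [fbF_nil]
    have h1 := bb_pos
    have h2 := bb_lt_one
    have h3 : bb ^ ((0 : ℕ) + 2) = bb * bb := by ring
    simp only [List.length_nil, h3]
    constructor <;> nlinarith
  | succ n ih =>
    intro x hlen hval
    match x with
    | [] =>
      rw [fbF_nil]
      have h1 := bb_pos
      have h2 := bb_lt_one
      have h3 : bb ^ ((0 : ℕ) + 2) = bb * bb := by ring
      simp only [List.length_nil, h3]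
      constructor <;> nlinarith
    | false :: rest =>
      have hrest : ValidFib rest := List.IsChain.tail hval
      have hlen' : rest.length ≤ n := by simpa using hlen
      obtain ⟨hl, hr⟩ := ih rest hlen' hrest
      rw [fbF_cons]
      simp only [Bool.false_eq_true, if_false, zero_add, List.length_cons]
      have hmono : bb ^ (rest.length + 1 + 2) ≤ bb ^ (rest.length + 2) := by
        exact pow_le_pow_of_le_one (le_of_lt bb_pos) (le_of_lt bb_lt_one) (by omega)
      constructor <;> linarith
    | true :: [] =>
      rw [fbF_cons, fbF_nil]
      simp only [List.length_nil, List.length_cons, if_true, add_zero]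
      have hψ : Real.goldenConj ^ ((0 : ℕ) + 2) = bb ^ 2 := by unfold bb; ring
      have h4 : bb ^ ((0 : ℕ) + 1 + 2) = bb ^ 2 * bb := by ring
      rw [hψ, h4, bb_sq]
      have h1 := bb_pos
      have h2 := bb_lt_one
      have hb2 := bb_sq
      constructor <;> nlinarith [hb2, sq_nonneg bb]
    | true :: true :: rest' =>
      exfalso
      have := List.isChain_cons_cons.mp hval
      rcases this.1 with h | h <;> simp at h
    | true :: false :: rest' =>
      have hrest' : ValidFib rest' := (List.IsChain.tail (List.IsChain.tail hval))
      have hlen' : rest'.length ≤ n := by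
        simp only [List.length_cons] at hlen; omega
      obtain ⟨hl, hr⟩ := ih rest' hlen' hrest'
      rw [fbF_cons, fbF_cons]
      simp only [if_true, Bool.false_eq_true, if_false, zero_add, List.length_cons]
      set L := rest'.length with hL
      obtain ⟨ha, hb⟩ := abs_goldConj_pow (L + 1 + 2)
      have hb2 : bb ^ 2 = 1 - bb := bb_sq
      have key1 : bb ^ (L + 2) - bb ^ (L + 1 + 2) = bb ^ (L + 1 + 1 + 2) := by
        have e1 : bb ^ (L + 1 + 1 + 2) = bb ^ (L + 2) * bb ^ 2 := by ring
        have e2 : bb ^ (L + 1 + 2) = bb ^ (L + 2) * bb := by ring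
        rw [e1, e2, hb2]; ring
      constructor <;> linarith

theorem fibVal_zero_append_bounds (x : List Bool) (hx : ValidFib x) :
    -((1 - Real.sqrt 5) / 2) ^ 2 <
      (fibVal (x ++ [false]) : ℝ) - (1 + Real.sqrt 5) / 2 * fibVal x ∧
    (fibVal (x ++ [false]) : ℝ) - (1 + Real.sqrt 5) / 2 * fibVal x <
      -((1 - Real.sqrt 5) / 2) := by
  obtain ⟨hl, hr⟩ := key x.length x le_rfl hx
  have hF : fbF x = (fibVal (x ++ [false]) : ℝ) - (1 + Real.sqrt 5) / 2 * fibVal x := rfl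
  rw [hF] at hl hr
  have hpow : 0 < bb ^ (x.length + 2) := pow_pos bb_pos _
  have e1 : -((1 - Real.sqrt 5) / 2) ^ 2 = -bb ^ 2 := by unfold bb Real.goldenConj; ring
  have e2 : -((1 - Real.sqrt 5) / 2) = bb := by unfold bb Real.goldenConj; ring
  rw [e1, e2]
  constructor <;> linarith
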